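/- If G is a maximal outerplanar graph of order n ≥ 4 that has exactly k internal triangles, then G has exactly k + 2 vertices of degree 2. -/

import Mathlib

open SimpleGraph

/-- `G` is (the representation of) a maximal outerplanar graph on the convex polygon
`0, 1, …, n-1`: it contains all outer edges `{i, (i+1) mod n}`, no two of its edges
cross, and it has exactly `2n - 3` edges. -/
def IsMop {n : ℕ} [NeZero n] (G : SimpleGraph (Fin n)) : Prop :=
  (∀ i : Fin n, G.Adj i (i + 1)) ∧
  (∀ a b c d : Fin n, a < b → b < c → c < d → G.Adj a c → ¬ G.Adj b d) ∧
  G.edgeSet.ncard = 2 * n - 3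

/-- An edge of `G` that is not an outer edge of the polygon. -/
def IsDiagonal {n : ℕ} [NeZero n] (G : SimpleGraph (Fin n)) (u v : Fin n) : Prop :=
  G.Adj u v ∧ v ≠ u + 1 ∧ u ≠ v + 1

/-- Three pairwise adjacent vertices all of whose connecting edges are diagonals. -/
def IsInternalTriangle {n : ℕ} [NeZero n] (G : SimpleGraph (Fin n)) (a b c : Fin n) : Prop :=
  IsDiagonal G a b ∧ IsDiagonal G b c ∧ IsDiagonal G a c

/-- The number of vertices of `G` having degree `2`. -/
noncomputable def degTwoCount {n : ℕ} (G : SimpleGraph (Fin n)) : ℕ :=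
  {v : Fin n | (G.neighborSet v).ncard = 2}.ncard

/-- `D` is a dominating set of `G`. -/
def IsDomSet {V : Type*} (G : SimpleGraph V) (D : Set V) : Prop :=
  ∀ v ∉ D, ∃ u ∈ D, G.Adj u v

/-- `D` is a disjunctive dominating set (2DD-set) of `G`: every vertex outside `D`
has a neighbor in `D` or at least two vertices of `D` at distance exactly `2`. -/
def IsDisjDomSet {V : Type*} (G : SimpleGraph V) (D : Set V) : Prop :=
  ∀ v ∉ D, (∃ u ∈ D, G.Adj u v) ∨
    ∃ u ∈ D, ∃ w ∈ D, u ≠ w ∧ G.dist u v = 2 ∧ G.dist w v = 2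

/-- The domination number `γ(G)`. -/
noncomputable def domNum {V : Type*} [Fintype V] (G : SimpleGraph V) : ℕ :=
  sInf {k : ℕ | ∃ D : Set V, IsDomSet G D ∧ D.ncard = k}

/-- The disjunctive domination number `γ₂ᵈ(G)`. -/
noncomputable def disjDomNum {V : Type*} [Fintype V] (G : SimpleGraph V) : ℕ :=
  sInf {k : ℕ | ∃ D : Set V, IsDisjDomSet G D ∧ D.ncard = k}

open Finset
open scoped Classical
set_option linter.unusedSectionVars false

namespace MopProof

variable {n : ℕ} [NeZero n] (G : SimpleGraph (Fin n))

/-- ordered-pair edges within the interval `[a,b]` -/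
noncomputable def IE (a b : Fin n) : Finset (Fin n × Fin n) :=
  Finset.univ.filter fun p =>
    a.val ≤ p.1.val ∧ p.1.val < p.2.val ∧ p.2.val ≤ b.val ∧ G.Adj p.1 p.2

noncomputable def Tight (a b : Fin n) : Prop :=
  (IE G a b).card = 2 * (b.val - a.val) - 1

lemma mem_IE {a b : Fin n} {p : Fin n × Fin n} :
    p ∈ IE G a b ↔ a.val ≤ p.1.val ∧ p.1.val < p.2.val ∧ p.2.val ≤ b.val ∧ G.Adj p.1 p.2 := by
  simp [IE]

/-- outer edge in val form -/
lemma val_add_one {a : Fin n} (h : a.val + 1 < n) : ((a + 1 : Fin n)).val = a.val + 1 := by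
  have h1 : (1 : Fin n).val = 1 % n := Fin.val_one' n
  rw [Fin.add_def, h1]
  have : 1 % n = 1 := Nat.mod_eq_of_lt (by omega)
  rw [this]
  exact Nat.mod_eq_of_lt h

lemma adj_succ (hout : ∀ i : Fin n, G.Adj i (i + 1)) {a b : Fin n}
    (h : a.val + 1 = b.val) : G.Adj a b := by
  have hb : b = a + 1 := by
    apply Fin.ext
    rw [val_add_one (h ▸ b.isLt)]
    omega
  rw [hb]; exact hout a


section

lemma cross (hcr : ∀ a b c d : Fin n, a < b → b < c → c < d → G.Adj a c → ¬ G.Adj b d) {a b c d : Fin n} (h1 : a.val < b.val) (h2 : b.val < c.val)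
    (h3 : c.val < d.val) (hac : G.Adj a c) : ¬ G.Adj b d :=
  hcr a b c d (by rwa [Fin.lt_def]) (by rwa [Fin.lt_def]) (by rwa [Fin.lt_def]) hac

/-- neighbor confinement -/
lemma nbr_conf (hcr : ∀ a b c d : Fin n, a < b → b < c → c < d → G.Adj a c → ¬ G.Adj b d) {a b v u : Fin n} (hab : G.Adj a b) (h1 : a.val < v.val)
    (h2 : v.val < b.val) (hvu : G.Adj v u) : a.val ≤ u.val ∧ u.val ≤ b.val := by
  by_contra hcon
  push_neg at hcon
  rcases Nat.lt_or_ge u.val a.val with hu | hu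
  · exact cross G hcr hu h1 h2 (hvu.symm) hab
  · have hub : b.val < u.val := by
      rcases Nat.lt_or_ge b.val u.val with h | h
      · exact h
      · omega
    exact cross G hcr h1 h2 hub hab hvu

/-- the minimal strict-interior neighbor of `b` above `a` -/
lemma exists_min_nbr (hout : ∀ i : Fin n, G.Adj i (i + 1)) {a b : Fin n} (h : a.val + 2 ≤ b.val) :
    ∃ c : Fin n, a.val < c.val ∧ c.val < b.val ∧ G.Adj c b ∧
      ∀ u : Fin n, a.val < u.val → u.val < c.val → ¬ G.Adj u b := by
  set T : Finset (Fin n) :=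
    Finset.univ.filter (fun u => a.val < u.val ∧ u.val < b.val ∧ G.Adj u b) with hT
  have hne : T.Nonempty := by
    refine ⟨⟨b.val - 1, by omega⟩, ?_⟩
    simp only [hT, Finset.mem_filter, Finset.mem_univ, true_and]
    refine ⟨by omega, by omega, adj_succ G hout (by simp; omega)⟩
  obtain ⟨c, hc, hmin⟩ := T.exists_min_image (fun u => u.val) hne
  simp only [hT, Finset.mem_filter, Finset.mem_univ, true_and] at hc
  refine ⟨c, hc.1, hc.2.1, hc.2.2, fun u h1 h2 hadj => ?_⟩
  have : u ∈ T := by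
    simp only [hT, Finset.mem_filter, Finset.mem_univ, true_and]
    exact ⟨h1, by omega, hadj⟩
  have := hmin u this
  omega


lemma IE_subset_split (hcr : ∀ a b c d : Fin n, a < b → b < c → c < d → G.Adj a c → ¬ G.Adj b d)
    {a b c : Fin n} (h1 : a.val < c.val) (h2 : c.val < b.val) (hcb : G.Adj c b)
    (hmin : ∀ u : Fin n, a.val < u.val → u.val < c.val → ¬ G.Adj u b) :
    IE G a b ⊆ IE G a c ∪ IE G c b ∪ {(a, b)} := by
  intro p hp
  rw [mem_IE] at hp
  obtain ⟨hp1, hp2, hp3, hp4⟩ := hp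
  simp only [Finset.mem_union, mem_IE, Finset.mem_singleton]
  rcases Nat.lt_or_ge p.2.val b.val with hlt | hge
  · -- p.2 < b
    rcases le_or_gt p.2.val c.val with hle | hgt
    · exact Or.inl (Or.inl ⟨hp1, hp2, hle, hp4⟩)
    · rcases le_or_gt c.val p.1.val with hle1 | hlt1
      · exact Or.inl (Or.inr ⟨hle1, hp2, by omega, hp4⟩)
      · exact absurd hcb (cross G hcr hlt1 hgt hlt hp4)
  · -- p.2 = b
    have hpb : p.2 = b := Fin.ext (by omega)
    rcases Nat.eq_or_lt_of_le hp1 with heq | hlt1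
    · have : p.1 = a := Fin.ext heq.symm
      exact Or.inr (by rw [Prod.ext_iff]; exact ⟨this, hpb⟩)
    · rcases le_or_gt c.val p.1.val with hle1 | hlt2
      · exact Or.inl (Or.inr ⟨hle1, hp2, by omega, hp4⟩)
      · exact absurd (hpb ▸ hp4) (hmin p.1 hlt1 hlt2)

lemma IE_disj {a b c : Fin n} (h1 : a.val < c.val) (h2 : c.val < b.val) :
    Disjoint (IE G a c) (IE G c b) := by
  rw [Finset.disjoint_left]
  intro p hp hp2
  rw [mem_IE] at hp hp2
  omega

lemma IE_card_le_split (hcr : ∀ a b c d : Fin n, a < b → b < c → c < d → G.Adj a c → ¬ G.Adj b d)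
    {a b c : Fin n} (h1 : a.val < c.val) (h2 : c.val < b.val) (hcb : G.Adj c b)
    (hmin : ∀ u : Fin n, a.val < u.val → u.val < c.val → ¬ G.Adj u b) :
    (IE G a b).card ≤ (IE G a c).card + (IE G c b).card + 1 := by
  calc (IE G a b).card ≤ (IE G a c ∪ IE G c b ∪ {(a, b)}).card :=
        Finset.card_le_card (IE_subset_split G hcr h1 h2 hcb hmin)
    _ ≤ (IE G a c ∪ IE G c b).card + 1 := by
        refine le_trans (Finset.card_union_le _ _) ?_
        simp
    _ ≤ (IE G a c).card + (IE G c b).card + 1 := by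
        have := Finset.card_union_le (IE G a c) (IE G c b)
        omega

lemma IE_upper : ∀ (m : ℕ) (hout : ∀ i : Fin n, G.Adj i (i + 1))
    (hcr : ∀ a b c d : Fin n, a < b → b < c → c < d → G.Adj a c → ¬ G.Adj b d)
    (a b : Fin n), b.val - a.val = m → a.val < b.val → (IE G a b).card ≤ 2 * m - 1 := by
  intro m
  induction m using Nat.strong_induction_on with
  | _ m ih =>
    intro hout hcr a b hm hab
    rcases Nat.lt_or_ge m 2 with hm2 | hm2
    · -- m = 1
      have hm1 : m = 1 := by omega
      have : IE G a b ⊆ {(a, b)} := by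
        intro p hp
        rw [mem_IE] at hp
        simp only [Finset.mem_singleton, Prod.ext_iff]
        constructor
        · exact Fin.ext (by omega)
        · exact Fin.ext (by omega)
      calc (IE G a b).card ≤ 1 := by
            simpa using Finset.card_le_card this
        _ ≤ 2 * m - 1 := by omega
    · obtain ⟨c, hc1, hc2, hcb, hmin⟩ := exists_min_nbr G hout (a:=a) (b:=b) (by omega)
      have ihl := ih (c.val - a.val) (by omega) hout hcr a c rfl (by omega)
      have ihr := ih (b.val - c.val) (by omega) hout hcr c b rfl (by omega)
      have := IE_card_le_split G hcr hc1 hc2 hcb hmin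
      omega


lemma split0 (hout : ∀ i : Fin n, G.Adj i (i + 1))
    (hcr : ∀ a b c d : Fin n, a < b → b < c → c < d → G.Adj a c → ¬ G.Adj b d)
    {a b : Fin n} (ht : Tight G a b) (h : a.val + 2 ≤ b.val) :
    ∃ c : Fin n, a.val < c.val ∧ c.val < b.val ∧ G.Adj a b ∧ G.Adj c b ∧
      Tight G a c ∧ Tight G c b ∧
      ∀ u : Fin n, a.val < u.val → u.val < c.val → ¬ G.Adj u b := by
  obtain ⟨c, hc1, hc2, hcb, hmin⟩ := exists_min_nbr G hout (a:=a) (b:=b) (by omega)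
  have hub_l := IE_upper G (c.val - a.val) hout hcr a c rfl (by omega)
  have hub_r := IE_upper G (b.val - c.val) hout hcr c b rfl (by omega)
  have hsub := IE_subset_split G hcr hc1 hc2 hcb hmin
  have hdisj := IE_disj G (a := a) (b := b) (c := c) hc1 hc2
  have hunion : (IE G a c ∪ IE G c b).card = (IE G a c).card + (IE G c b).card :=
    Finset.card_union_of_disjoint hdisj
  have hsub2 : IE G a c ∪ IE G c b ⊆ IE G a b := by
    intro p hp
    rcases Finset.mem_union.1 hp with hp | hp <;> rw [mem_IE] at hp ⊢ <;>
      exact ⟨by omega, hp.2.1, by omega, hp.2.2.2⟩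
  have hle2 : (IE G a c ∪ IE G c b).card ≤ (IE G a b).card := Finset.card_le_card hsub2
  have hcard := IE_card_le_split G hcr hc1 hc2 hcb hmin
  rw [Tight] at ht
  -- tightness forces subinterval tightness
  have htl : Tight G a c := by rw [Tight]; omega
  have htr : Tight G c b := by rw [Tight]; omega
  -- and forces (a,b) to be an edge
  have hab : G.Adj a b := by
    by_contra hnab
    have : IE G a b ⊆ IE G a c ∪ IE G c b := by
      intro p hp
      rcases Finset.mem_union.1 (hsub hp) with h1 | h1
      · exact h1
      · exfalso
        rw [Finset.mem_singleton] at h1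
        rw [mem_IE] at hp
        have h4 := hp.2.2.2
        rw [h1] at h4
        exact hnab h4
    have := Finset.card_le_card this
    omega
  exact ⟨c, hc1, hc2, hab, hcb, htl, htr, hmin⟩

lemma tight_adj (hout : ∀ i : Fin n, G.Adj i (i + 1))
    (hcr : ∀ a b c d : Fin n, a < b → b < c → c < d → G.Adj a c → ¬ G.Adj b d)
    {a b : Fin n} (ht : Tight G a b) (h : a.val < b.val) : G.Adj a b := by
  rcases le_or_gt (a.val + 2) b.val with h2 | h2
  · obtain ⟨c, _, _, hab, _⟩ := split0 G hout hcr ht h2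
    exact hab
  · exact adj_succ G hout (by omega)

/-- the full split package -/
lemma split (hout : ∀ i : Fin n, G.Adj i (i + 1))
    (hcr : ∀ a b c d : Fin n, a < b → b < c → c < d → G.Adj a c → ¬ G.Adj b d)
    {a b : Fin n} (ht : Tight G a b) (h : a.val + 2 ≤ b.val) :
    ∃ c : Fin n, a.val < c.val ∧ c.val < b.val ∧ G.Adj a b ∧ G.Adj c b ∧ G.Adj a c ∧
      Tight G a c ∧ Tight G c b ∧
      ∀ u : Fin n, a.val < u.val → u.val < c.val → ¬ G.Adj u b := by
  obtain ⟨c, hc1, hc2, hab, hcb, htl, htr, hmin⟩ := split0 G hout hcr ht h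
  exact ⟨c, hc1, hc2, hab, hcb, tight_adj G hout hcr htl hc1, htl, htr, hmin⟩

/-- uniqueness of the splitting vertex -/
lemma root_unique
    (hcr : ∀ a b c d : Fin n, a < b → b < c → c < d → G.Adj a c → ¬ G.Adj b d)
    {a b c : Fin n} (hc1 : a.val < c.val) (hc2 : c.val < b.val) (hcb : G.Adj c b)
    (hmin : ∀ u : Fin n, a.val < u.val → u.val < c.val → ¬ G.Adj u b)
    {y : Fin n} (hy1 : a.val < y.val) (hy2 : y.val < b.val)
    (hay : G.Adj a y) (hyb : G.Adj y b) : y = c := by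
  rcases lt_trichotomy y.val c.val with h | h | h
  · exact absurd hyb (hmin y hy1 h)
  · exact Fin.ext h
  · exact absurd hcb (cross G hcr hc1 h hy2 hay)

/-- every edge inside `[a,b]` other than `(a,b)` lies in one of the two sides -/
lemma edge_loc
    (hcr : ∀ a b c d : Fin n, a < b → b < c → c < d → G.Adj a c → ¬ G.Adj b d)
    {a b c : Fin n} (hc1 : a.val < c.val) (hc2 : c.val < b.val) (hcb : G.Adj c b)
    (hmin : ∀ u : Fin n, a.val < u.val → u.val < c.val → ¬ G.Adj u b)
    {u v : Fin n} (h1 : a.val ≤ u.val) (h2 : u.val < v.val) (h3 : v.val ≤ b.val)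
    (hadj : G.Adj u v) : (u = a ∧ v = b) ∨ v.val ≤ c.val ∨ c.val ≤ u.val := by
  have : (u, v) ∈ IE G a b := by rw [mem_IE]; exact ⟨h1, h2, h3, hadj⟩
  rcases Finset.mem_union.1 (IE_subset_split G hcr hc1 hc2 hcb hmin this) with h | h
  · rcases Finset.mem_union.1 h with h | h <;> rw [mem_IE] at h
    · exact Or.inr (Or.inl h.2.2.1)
    · exact Or.inr (Or.inr h.1)
  · rw [Finset.mem_singleton, Prod.ext_iff] at h
    exact Or.inl h


noncomputable def ind (P : Prop) : ℕ := if P then 1 else 0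

lemma ind_pos {P : Prop} (h : P) : ind P = 1 := if_pos h
lemma ind_neg {P : Prop} (h : ¬ P) : ind P = 0 := if_neg h
lemma ind_le_one (P : Prop) : ind P ≤ 1 := by unfold ind; split <;> omega

noncomputable def dG (v : Fin n) : ℕ := (G.neighborSet v).ncard

noncomputable def NF (v : Fin n) : Finset (Fin n) :=
  Finset.univ.filter fun u => G.Adj v u

lemma mem_NF {v u : Fin n} : u ∈ NF G v ↔ G.Adj v u := by simp [NF]

lemma dG_eq_card (v : Fin n) : dG G v = (NF G v).card := by
  rw [dG, Set.ncard_eq_toFinset_card']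
  congr 1
  ext u
  rw [Set.mem_toFinset]; simp [NF]

/-- a vertex with three distinct neighbors has degree ≠ 2 -/
lemma dG_ne_two {v x y z : Fin n} (hx : G.Adj v x) (hy : G.Adj v y) (hz : G.Adj v z)
    (hxy : x ≠ y) (hxz : x ≠ z) (hyz : y ≠ z) : dG G v ≠ 2 := by
  have hsub : {x, y, z} ⊆ NF G v := by
    intro u hu
    simp only [Finset.mem_insert, Finset.mem_singleton] at hu
    rw [mem_NF]
    rcases hu with h | h | h <;> subst h <;> assumption
  have h3 : ({x, y, z} : Finset (Fin n)).card = 3 := by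
    rw [Finset.card_insert_of_notMem (by simp [hxy, hxz]),
      Finset.card_insert_of_notMem (by simp [hyz]), Finset.card_singleton]
  have := Finset.card_le_card hsub
  rw [dG_eq_card]
  omega

/-- interior vertex of a two-interval has degree exactly 2 -/
lemma dG_eq_two (hout : ∀ i : Fin n, G.Adj i (i + 1))
    (hcr : ∀ a b c d : Fin n, a < b → b < c → c < d → G.Adj a c → ¬ G.Adj b d)
    {a b v : Fin n} (hab : G.Adj a b) (h1 : a.val + 1 = v.val) (h2 : v.val + 1 = b.val) :
    dG G v = 2 := by
  have hva : G.Adj v a := (adj_succ G hout h1).symm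
  have hvb : G.Adj v b := adj_succ G hout h2
  have : NF G v = {a, b} := by
    ext u
    rw [mem_NF]
    simp only [Finset.mem_insert, Finset.mem_singleton]
    constructor
    · intro hu
      have hc := nbr_conf G hcr hab (by omega) (by omega) hu
      have hne : u ≠ v := fun h => G.irrefl (h ▸ hu)
      have : u.val ≠ v.val := fun h => hne (Fin.ext h)
      rcases Nat.lt_or_ge u.val v.val with h | h
      · exact Or.inl (Fin.ext (by omega))
      · exact Or.inr (Fin.ext (by omega))
    · rintro (rfl | rfl)
      · exact hva
      · exact hvb
  rw [dG_eq_card, this]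
  rw [Finset.card_insert_of_notMem (by simp; exact fun h => by omega), Finset.card_singleton]


noncomputable def e2 (a b : Fin n) : ℕ :=
  (Finset.univ.filter fun v : Fin n =>
    a.val < v.val ∧ v.val < b.val ∧ dG G v = 2).card

noncomputable def it0set (a b : Fin n) : Finset (Fin n × Fin n × Fin n) :=
  Finset.univ.filter fun t =>
    a.val ≤ t.1.val ∧ t.1.val + 2 ≤ t.2.1.val ∧ t.2.1.val + 2 ≤ t.2.2.val ∧
      t.2.2.val ≤ b.val ∧ G.Adj t.1 t.2.1 ∧ G.Adj t.2.1 t.2.2 ∧ G.Adj t.1 t.2.2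

noncomputable def itxset (a b : Fin n) : Finset (Fin n × Fin n × Fin n) :=
  (it0set G a b).filter fun t => ¬ (t.1 = a ∧ t.2.2 = b)

noncomputable def it0 (a b : Fin n) : ℕ := (it0set G a b).card
noncomputable def itx (a b : Fin n) : ℕ := (itxset G a b).card

noncomputable def rootset (a b : Fin n) : Finset (Fin n) :=
  Finset.univ.filter fun y =>
    a.val + 2 ≤ y.val ∧ y.val + 2 ≤ b.val ∧ G.Adj a y ∧ G.Adj y b

noncomputable def root (a b : Fin n) : ℕ := (rootset G a b).card

/-- splitting the degree-two count at a vertex of degree ≠ 2 -/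
lemma e2_split {a b c : Fin n} (hc1 : a.val < c.val) (hc2 : c.val < b.val)
    (hc : dG G c ≠ 2) : e2 G a b = e2 G a c + e2 G c b := by
  rw [e2, e2, e2]
  rw [← Finset.card_union_of_disjoint]
  · congr 1
    ext v
    simp only [Finset.mem_filter, Finset.mem_univ, true_and, Finset.mem_union]
    constructor
    · rintro ⟨h1, h2, h3⟩
      rcases lt_trichotomy v.val c.val with h | h | h
      · exact Or.inl ⟨h1, h, h3⟩
      · exact absurd h3 (by rwa [show v = c from Fin.ext h])
      · exact Or.inr ⟨h, h2, h3⟩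
    · rintro (⟨h1, h2, h3⟩ | ⟨h1, h2, h3⟩) <;> exact ⟨by omega, by omega, h3⟩
  · rw [Finset.disjoint_left]
    intro v hv hv2
    simp only [Finset.mem_filter] at hv hv2
    omega

/-- the triple `(a, c, b)` is the unique it0-triple not inside one of the sides, and
the itx-triples of `[a,b]` are exactly it0-triples of the sides -/
lemma itx_split (hcr : ∀ a b c d : Fin n, a < b → b < c → c < d → G.Adj a c → ¬ G.Adj b d)
    {a b c : Fin n} (hc1 : a.val < c.val) (hc2 : c.val < b.val) (hcb : G.Adj c b)
    (hmin : ∀ u : Fin n, a.val < u.val → u.val < c.val → ¬ G.Adj u b) :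
    itx G a b = it0 G a c + it0 G c b := by
  rw [itx, it0, it0, ← Finset.card_union_of_disjoint]
  · congr 1
    ext t
    obtain ⟨x, y, z⟩ := t
    simp only [itxset, it0set, Finset.mem_filter, Finset.mem_univ, true_and,
      Finset.mem_union]
    constructor
    · rintro ⟨⟨h1, h2, h3, h4, a1, a2, a3⟩, hne⟩
      -- locate the edge (x,z)
      rcases edge_loc G hcr hc1 hc2 hcb hmin h1 (by omega) h4 a3 with ⟨rfl, rfl⟩ | h | h
      · -- x = a, z = b: then y = c, contradiction with hne... derive y = c
        exfalso
        -- y between: locate (a,y): must have y ≤ c; locate (y,b): c ≤ y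
        have l1 := edge_loc G hcr hc1 hc2 hcb hmin (le_refl _) (by omega) (by omega) a1
        have l2 := edge_loc G hcr hc1 hc2 hcb hmin (by omega) (by omega) (le_refl _) a2
        have hy : y = c := by
          rcases l1 with ⟨_, hyb⟩ | h | h
          · exact absurd (congrArg Fin.val hyb) (by omega)
          · rcases l2 with ⟨hya, _⟩ | h' | h'
            · exact absurd (congrArg Fin.val hya) (by omega)
            · exact Fin.ext (by omega)
            · exact Fin.ext (by omega)
          · omega
        exact hne ⟨rfl, rfl⟩
      · exact Or.inl ⟨h1, h2, by omega, by omega, a1, a2, a3⟩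
      · exact Or.inr ⟨h, h2, by omega, h4, a1, a2, a3⟩
    · rintro (⟨h1, h2, h3, h4, a1, a2, a3⟩ | ⟨h1, h2, h3, h4, a1, a2, a3⟩)
      · refine ⟨⟨h1, h2, h3, by omega, a1, a2, a3⟩, ?_⟩
        rintro ⟨rfl, rfl⟩
        omega
      · refine ⟨⟨by omega, h2, h3, h4, a1, a2, a3⟩, ?_⟩
        rintro ⟨rfl, rfl⟩
        omega
  · rw [Finset.disjoint_left]
    intro t ht ht2
    simp only [it0set, Finset.mem_filter] at ht ht2
    omega

/-- `it0` differs from `itx` by the root-triples -/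
lemma it0_eq (hab : G.Adj a b) (hlt : a.val < b.val) :
    it0 G a b = itx G a b + root G a b := by
  rw [it0, itx, root]
  have : it0set G a b = itxset G a b ∪ (rootset G a b).image (fun y => (a, y, b)) := by
    ext t
    obtain ⟨x, y, z⟩ := t
    simp only [itxset, it0set, rootset, Finset.mem_filter, Finset.mem_univ, true_and,
      Finset.mem_union, Finset.mem_image, Prod.mk.injEq]
    constructor
    · rintro ⟨h1, h2, h3, h4, a1, a2, a3⟩
      by_cases hc : x = a ∧ z = b
      · obtain ⟨rfl, rfl⟩ := hc
        exact Or.inr ⟨y, ⟨h2, h3, a1, a2⟩, rfl, rfl, rfl⟩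
      · exact Or.inl ⟨⟨h1, h2, h3, h4, a1, a2, a3⟩, hc⟩
    · rintro (⟨⟨h1, h2, h3, h4, a1, a2, a3⟩, _⟩ | ⟨y', ⟨h1, h2, a1, a2⟩, rfl, rfl, rfl⟩)
      · exact ⟨h1, h2, h3, h4, a1, a2, a3⟩
      · exact ⟨le_refl _, h1, h2, le_refl _, a1, a2, hab⟩
  rw [this, Finset.card_union_of_disjoint, Finset.card_image_of_injective]
  · intro y1 y2 h
    exact congrArg (fun p => p.2.1) h
  · rw [Finset.disjoint_left]
    intro t ht ht2
    simp only [itxset, Finset.mem_filter] at ht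
    simp only [Finset.mem_image] at ht2
    obtain ⟨y, _, rfl⟩ := ht2
    exact ht.2 ⟨rfl, rfl⟩


noncomputable def AdjA (a b : Fin n) : Prop := ∃ u : Fin n, u.val = a.val + 1 ∧ G.Adj u b
noncomputable def AdjB (a b : Fin n) : Prop := ∃ u : Fin n, u.val + 1 = b.val ∧ G.Adj a u

lemma rooteq (hout : ∀ i : Fin n, G.Adj i (i + 1))
    (hcr : ∀ a b c d : Fin n, a < b → b < c → c < d → G.Adj a c → ¬ G.Adj b d)
    {a b : Fin n} (ht : Tight G a b) (h : a.val + 2 ≤ b.val) :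
    root G a b + ind (AdjA G a b) + ind (AdjB G a b) = 1 + ind (b.val - a.val = 2) := by
  obtain ⟨c, hc1, hc2, hab, hcb, hac, htl, htr, hmin⟩ := split G hout hcr ht h
  rcases eq_or_lt_of_le h with hm2 | hm3
  · -- b - a = 2
    have hcv : c.val = a.val + 1 := by omega
    have hroot : root G a b = 0 := by
      rw [root, Finset.card_eq_zero]
      rw [Finset.eq_empty_iff_forall_notMem]
      intro y hy
      simp only [rootset, Finset.mem_filter] at hy
      omega
    rw [hroot, ind_pos ⟨c, hcv, hcb⟩, ind_pos ⟨c, by omega, hac⟩, ind_pos (by omega)]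
  · -- b - a ≥ 3
    have hA : AdjA G a b ↔ c.val = a.val + 1 := by
      constructor
      · rintro ⟨u, hu, hub⟩
        by_contra hne
        have : u.val < c.val := by omega
        exact hmin u (by omega) this hub
      · intro hcv
        exact ⟨c, hcv, hcb⟩
    have hB : AdjB G a b ↔ c.val + 1 = b.val := by
      constructor
      · rintro ⟨u, hu, hau⟩
        have hub : G.Adj u b := adj_succ G hout hu
        have := root_unique G hcr hc1 hc2 hcb hmin (y := u) (by omega) (by omega) hau hub
        omega
      · intro hcv
        exact ⟨c, hcv, hac⟩
    have hroot : root G a b = ind (a.val + 2 ≤ c.val ∧ c.val + 2 ≤ b.val) := by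
      by_cases hg : a.val + 2 ≤ c.val ∧ c.val + 2 ≤ b.val
      · rw [ind_pos hg, root, Finset.card_eq_one]
        refine ⟨c, ?_⟩
        ext y
        simp only [rootset, Finset.mem_filter, Finset.mem_univ, true_and,
          Finset.mem_singleton]
        constructor
        · rintro ⟨h1, h2, hay, hyb⟩
          exact root_unique G hcr hc1 hc2 hcb hmin (by omega) (by omega) hay hyb
        · rintro rfl
          exact ⟨hg.1, hg.2, hac, hcb⟩
      · rw [ind_neg hg, root, Finset.card_eq_zero, Finset.eq_empty_iff_forall_notMem]
        intro y hy
        simp only [rootset, Finset.mem_filter, Finset.mem_univ, true_and] at hy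
        have := root_unique G hcr hc1 hc2 hcb hmin (y := y) (by omega) (by omega)
          hy.2.2.1 hy.2.2.2
        subst this
        exact hg ⟨hy.1, hy.2.1⟩
    rw [hroot, ind_neg (show ¬ (b.val - a.val = 2) by omega)]
    by_cases h1 : c.val = a.val + 1
    · rw [ind_pos (hA.2 h1), ind_neg (show ¬ (a.val + 2 ≤ c.val ∧ c.val + 2 ≤ b.val) by omega),
        ind_neg (show ¬ AdjB G a b by rw [hB]; omega)]
    · by_cases h2 : c.val + 1 = b.val
      · rw [ind_pos (hB.2 h2), ind_neg (show ¬ AdjA G a b by rw [hA]; omega),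
          ind_neg (show ¬ (a.val + 2 ≤ c.val ∧ c.val + 2 ≤ b.val) by omega)]
      · rw [ind_pos (show a.val + 2 ≤ c.val ∧ c.val + 2 ≤ b.val by omega),
          ind_neg (show ¬ AdjA G a b by rw [hA]; omega),
          ind_neg (show ¬ AdjB G a b by rw [hB]; omega)]


lemma e2_empty {a b : Fin n} (h : b.val ≤ a.val + 1) : e2 G a b = 0 := by
  rw [e2, Finset.card_eq_zero, Finset.eq_empty_iff_forall_notMem]
  intro v hv
  simp only [Finset.mem_filter, Finset.mem_univ, true_and] at hv
  omega

lemma it0_empty {a b : Fin n} (h : b.val ≤ a.val + 3) : it0 G a b = 0 := by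
  rw [it0, Finset.card_eq_zero, Finset.eq_empty_iff_forall_notMem]
  intro t ht
  simp only [it0set, Finset.mem_filter, Finset.mem_univ, true_and] at ht
  omega

lemma itx_empty {a b : Fin n} (h : b.val ≤ a.val + 3) : itx G a b = 0 := by
  have : itxset G a b ⊆ it0set G a b := Finset.filter_subset _ _
  have h2 := Finset.card_le_card this
  have h3 := it0_empty G (a := a) (b := b) h
  rw [it0] at h3
  rw [itx]
  omega

lemma root_empty {a b : Fin n} (h : b.val ≤ a.val + 3) : root G a b = 0 := by
  rw [root, Finset.card_eq_zero, Finset.eq_empty_iff_forall_notMem]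
  intro y hy
  simp only [rootset, Finset.mem_filter, Finset.mem_univ, true_and] at hy
  omega

theorem ST (hout : ∀ i : Fin n, G.Adj i (i + 1))
    (hcr : ∀ a b c d : Fin n, a < b → b < c → c < d → G.Adj a c → ¬ G.Adj b d) :
    ∀ (m : ℕ) (a b : Fin n), b.val - a.val = m → 2 ≤ m → Tight G a b →
    e2 G a b + ind (AdjA G a b) + ind (AdjB G a b) = itx G a b + 2 + ind (m = 2) := by
  intro m
  induction m using Nat.strong_induction_on with
  | _ m ih =>
    intro a b hm hm2 ht
    have hab : G.Adj a b := tight_adj G hout hcr ht (by omega)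
    rcases eq_or_lt_of_le hm2 with hm2' | hm3
    · -- base case m = 2
      have hv : a.val + 1 < n := by have := b.isLt; omega
      set v0 : Fin n := ⟨a.val + 1, hv⟩ with hv0
      have hd : dG G v0 = 2 := dG_eq_two G hout hcr hab (by simp [hv0]) (by simp [hv0]; omega)
      have he2 : e2 G a b = 1 := by
        rw [e2, Finset.card_eq_one]
        refine ⟨v0, ?_⟩
        ext v
        simp only [Finset.mem_filter, Finset.mem_univ, true_and, Finset.mem_singleton]
        constructor
        · rintro ⟨h1, h2, _⟩
          exact Fin.ext (by simp [hv0]; omega)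
        · rintro rfl
          exact ⟨by simp [hv0], by simp [hv0]; omega, hd⟩
      rw [he2, itx_empty G (by omega), ind_pos (show m = 2 by omega),
        ind_pos (show AdjA G a b from ⟨v0, by simp [hv0], adj_succ G hout (by simp [hv0]; omega)⟩),
        ind_pos (show AdjB G a b from ⟨v0, by simp [hv0]; omega, adj_succ G hout (by simp [hv0])⟩)]
    · -- inductive case m ≥ 3
      obtain ⟨c, hc1, hc2, _, hcb, hac, htl, htr, hmin⟩ := split G hout hcr ht (by omega)
      set m1 := c.val - a.val with hm1
      set m2 := b.val - c.val with hm2d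
      have hmm : m1 + m2 = m := by omega
      have hm1p : 1 ≤ m1 := by omega
      have hm2p : 1 ≤ m2 := by omega
      have hnot : ¬ (m1 = 1 ∧ m2 = 1) := by omega
      -- dG c ≠ 2
      have hdgc : dG G c ≠ 2 := by
        rcases Nat.eq_or_lt_of_le hm1p with h1 | h1
        · -- m1 = 1, so m2 ≥ 2
          have hm2c : 2 ≤ m2 := by omega
          have hcp : c.val + 1 < n := by have := b.isLt; omega
          set cp : Fin n := ⟨c.val + 1, hcp⟩
          exact dG_ne_two G hac.symm (adj_succ G hout (show c.val + 1 = cp.val from rfl)) hcb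
            (fun h => by have := congrArg Fin.val h; simp [cp] at this; omega)
            (fun h => by have := congrArg Fin.val h; omega)
            (fun h => by have := congrArg Fin.val h; simp [cp] at this; omega)
        · -- m1 ≥ 2
          set cm : Fin n := ⟨c.val - 1, by have := c.isLt; omega⟩
          exact dG_ne_two G hac.symm
            ((adj_succ G hout (show cm.val + 1 = c.val by simp [cm]; omega)).symm) hcb
            (fun h => by have := congrArg Fin.val h; simp [cm] at this; omega)
            (fun h => by have := congrArg Fin.val h; omega)
            (fun h => by have := congrArg Fin.val h; simp [cm] at this; omega)
      have hE : e2 G a b = e2 G a c + e2 G c b := e2_split G hc1 hc2 hdgc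
      have hI : itx G a b = (itx G a c + root G a c) + (itx G c b + root G c b) := by
        rw [itx_split G hcr hc1 hc2 hcb hmin, it0_eq G hac hc1, it0_eq G hcb hc2]
      have hgoal2 : ind (m = 2) = 0 := ind_neg (by omega)
      rcases Nat.eq_or_lt_of_le hm1p with h1 | h1
      · -- m1 = 1, m2 ≥ 2
        have hm2c : 2 ≤ m2 := by omega
        have hIH := ih m2 (by omega) c b rfl hm2c htr
        have hRE := rooteq G hout hcr htr (by omega)
        rw [← hm2d] at hRE
        have hiA : ind (AdjA G a b) = 1 := ind_pos ⟨c, by omega, hcb⟩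
        have hiB : ind (AdjB G a b) = 0 := by
          apply ind_neg
          rintro ⟨u, hu, hau⟩
          exact cross G hcr hc1 (show c.val < u.val by omega) (show u.val < b.val by omega)
            hau hcb
        have hz1 : e2 G a c = 0 := e2_empty G (by omega)
        have hz2 : itx G a c = 0 := itx_empty G (by omega)
        have hz3 : root G a c = 0 := root_empty G (by omega)
        omega
      · rcases Nat.eq_or_lt_of_le hm2p with h2 | h2
        · -- m2 = 1, m1 ≥ 2
          have hIH := ih m1 (by omega) a c rfl (by omega) htl
          have hRE := rooteq G hout hcr htl (by omega)
          rw [← hm1] at hRE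
          have hiB : ind (AdjB G a b) = 1 := ind_pos ⟨c, by omega, hac⟩
          have hiA : ind (AdjA G a b) = 0 := by
            apply ind_neg
            rintro ⟨u, hu, hub⟩
            exact hmin u (by omega) (by omega) hub
          have hz1 : e2 G c b = 0 := e2_empty G (by omega)
          have hz2 : itx G c b = 0 := itx_empty G (by omega)
          have hz3 : root G c b = 0 := root_empty G (by omega)
          omega
        · -- m1 ≥ 2 and m2 ≥ 2
          have hIH1 := ih m1 (by omega) a c rfl (by omega) htl
          have hIH2 := ih m2 (by omega) c b rfl (by omega) htr
          have hRE1 := rooteq G hout hcr htl (by omega)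
          have hRE2 := rooteq G hout hcr htr (by omega)
          rw [← hm1] at hRE1
          rw [← hm2d] at hRE2
          have hiA : ind (AdjA G a b) = 0 := by
            apply ind_neg
            rintro ⟨u, hu, hub⟩
            exact hmin u (by omega) (by omega) hub
          have hiB : ind (AdjB G a b) = 0 := by
            apply ind_neg
            rintro ⟨u, hu, hau⟩
            exact cross G hcr hc1 (show c.val < u.val by omega)
              (show u.val < b.val by omega) hau hcb
          omega


lemma adj_last_zero (hout : ∀ i : Fin n, G.Adj i (i + 1)) (hn : 2 ≤ n)
    {b : Fin n} (hb : b.val = n - 1) : G.Adj b 0 := by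
  have hval : ((b + 1 : Fin n)).val = 0 := by
    have h1 : (1 : Fin n).val = 1 := by rw [Fin.val_one']; exact Nat.mod_eq_of_lt (by omega)
    rw [Fin.val_add, h1, hb, Nat.sub_add_cancel (by omega), Nat.mod_self]
  have hz : (b + 1 : Fin n) = 0 := Fin.ext (by rw [hval]; simp)
  have h2 := hout b
  rwa [hz] at h2

lemma tight_full (hn : 2 ≤ n) (hcount : G.edgeSet.ncard = 2 * n - 3)
    {b : Fin n} (hb : b.val = n - 1) : Tight G 0 b := by
  rw [Tight, Fin.val_zero, hb]
  have hcard : (IE G 0 b).card = G.edgeSet.ncard := by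
    rw [Set.ncard_eq_toFinset_card']
    apply Finset.card_bij (fun p _ => Sym2.mk p.1 p.2)
    · intro p hp
      rw [mem_IE] at hp
      rw [Set.mem_toFinset, SimpleGraph.mem_edgeSet]
      exact hp.2.2.2
    · intro p hp q hq heq
      rw [mem_IE] at hp hq
      rw [Sym2.mk_eq_mk_iff] at heq
      rcases heq with h | h
      · exact h
      · rw [Prod.ext_iff] at h
        simp only [Prod.fst_swap, Prod.snd_swap] at h
        have h1 := congrArg Fin.val h.1
        have h2 := congrArg Fin.val h.2
        exfalso
        omega
    · intro e he
      rw [Set.mem_toFinset] at he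
      induction e with
      | _ x y =>
        rw [SimpleGraph.mem_edgeSet] at he
        have hne : x ≠ y := G.ne_of_adj he
        have hnev : x.val ≠ y.val := fun h => hne (Fin.ext h)
        have h0 : (0 : Fin n).val = 0 := Fin.val_zero n
        rcases Nat.lt_or_ge x.val y.val with h | h
        · refine ⟨(x, y), ?_, rfl⟩
          rw [mem_IE]
          refine ⟨?_, ?_, ?_, he⟩
          · show (0 : Fin n).val ≤ x.val; omega
          · show x.val < y.val; omega
          · show y.val ≤ b.val; have := y.isLt; omega
        · refine ⟨(y, x), ?_, ?_⟩
          · rw [mem_IE]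
            refine ⟨?_, ?_, ?_, he.symm⟩
            · show (0 : Fin n).val ≤ y.val; omega
            · show y.val < x.val; omega
            · show x.val ≤ b.val; have := x.isLt; omega
          · exact Sym2.eq_swap
  omega


lemma ind_congr {P Q : Prop} (h : P ↔ Q) : ind P = ind Q := by
  unfold ind
  by_cases hp : P
  · rw [if_pos hp, if_pos (h.1 hp)]
  · rw [if_neg hp, if_neg (fun hq => hp (h.2 hq))]

lemma degTwoCount_split (hn : 4 ≤ n) {b : Fin n} (hb : b.val = n - 1) :
    degTwoCount G = e2 G 0 b + ind (dG G 0 = 2) + ind (dG G b = 2) := by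
  have h0 : (0 : Fin n).val = 0 := Fin.val_zero n
  have hne : (0 : Fin n) ≠ b := fun h => by
    have := congrArg Fin.val h
    omega
  have hcount : degTwoCount G = (Finset.univ.filter fun v : Fin n => dG G v = 2).card := by
    rw [degTwoCount, Set.ncard_eq_toFinset_card']
    congr 1
    ext v
    rw [Set.mem_toFinset, Finset.mem_filter]; simp [dG]
  rw [hcount]
  have hsplit : (Finset.univ.filter fun v : Fin n => dG G v = 2) =
      (Finset.univ.filter fun v : Fin n => 0 < v.val ∧ v.val < b.val ∧ dG G v = 2) ∪
        (({0, b} : Finset (Fin n)).filter fun v => dG G v = 2) := by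
    ext v
    simp only [Finset.mem_filter, Finset.mem_univ, true_and, Finset.mem_union,
      Finset.mem_insert, Finset.mem_singleton]
    constructor
    · intro hv
      rcases Nat.eq_zero_or_pos v.val with h | h
      · exact Or.inr ⟨Or.inl (Fin.ext (by omega)), hv⟩
      · rcases Nat.lt_or_ge v.val b.val with h2 | h2
        · exact Or.inl ⟨h, h2, hv⟩
        · have : v = b := Fin.ext (by have := v.isLt; omega)
          exact Or.inr ⟨Or.inr this, hv⟩
    · rintro (⟨_, _, hv⟩ | ⟨_, hv⟩) <;> exact hv
  rw [hsplit, Finset.card_union_of_disjoint]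
  · have hpair : (({0, b} : Finset (Fin n)).filter fun v => dG G v = 2).card =
        ind (dG G 0 = 2) + ind (dG G b = 2) := by
      rw [Finset.filter_insert, Finset.filter_singleton]
      by_cases h1 : dG G 0 = 2 <;> by_cases h2 : dG G b = 2 <;>
        simp [h1, h2, ind_pos, ind_neg, hne, ind]
    rw [hpair, e2]
    have : (0 : Fin n).val = 0 := h0
    simp only [this]
    ring
  · rw [Finset.disjoint_left]
    intro v hv hv2
    simp only [Finset.mem_filter, Finset.mem_univ, true_and, Finset.mem_insert,
      Finset.mem_singleton] at hv hv2
    rcases hv2.1 with h | h <;> rw [h] at hv <;> omega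

lemma dg_zero_iff (hn : 4 ≤ n) (hout : ∀ i : Fin n, G.Adj i (i + 1))
    (hcr : ∀ a b c d : Fin n, a < b → b < c → c < d → G.Adj a c → ¬ G.Adj b d)
    {b : Fin n} (hb : b.val = n - 1) (ht : Tight G 0 b) :
    dG G 0 = 2 ↔ AdjA G 0 b := by
  have h0 : (0 : Fin n).val = 0 := Fin.val_zero n
  have hone : (1 : ℕ) < n := by omega
  set one : Fin n := ⟨1, hone⟩ with hone'
  have hadj01 : G.Adj 0 one := adj_succ G hout (by rw [h0])
  have hadj0b : G.Adj 0 b := (adj_last_zero G hout (by omega) hb).symm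
  constructor
  · intro hd
    obtain ⟨c, hc1, hc2, _, hcb, hac, _, _, _⟩ := split G hout hcr ht (by omega)
    rw [h0] at hc1
    by_cases hcv : c.val = 1
    · exact ⟨c, by omega, hcb⟩
    · exfalso
      apply dG_ne_two G hadj01 (hac) hadj0b ?_ ?_ ?_ hd
      · exact fun h => hcv (by have := congrArg Fin.val h; simp [hone'] at this; omega)
      · exact fun h => by have := congrArg Fin.val h; simp [hone'] at this; omega
      · exact fun h => by have := congrArg Fin.val h; omega
  · rintro ⟨u, hu, hub⟩
    rw [h0] at hu
    have hadj0u : G.Adj 0 u := adj_succ G hout (by omega)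
    have : NF G 0 = {u, b} := by
      ext w
      rw [mem_NF]
      simp only [Finset.mem_insert, Finset.mem_singleton]
      constructor
      · intro hw
        have hwz : w ≠ 0 := fun h => G.irrefl (h ▸ hw)
        have hwzv : w.val ≠ 0 := fun h => hwz (Fin.ext (by omega))
        by_cases h1 : w.val = 1
        · exact Or.inl (Fin.ext (by omega))
        · by_cases h2 : w.val = n - 1
          · exact Or.inr (Fin.ext (by omega))
          · exfalso
            have hwlt := w.isLt
            exact cross G hcr (show (0:Fin n).val < u.val by omega)
              (show u.val < w.val by omega) (show w.val < b.val by omega) hw hub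
      · rintro (rfl | rfl)
        · exact hadj0u
        · exact hadj0b
    rw [dG_eq_card, this, Finset.card_insert_of_notMem, Finset.card_singleton]
    simp only [Finset.mem_singleton]
    exact fun h => by have := congrArg Fin.val h; omega

lemma dg_last_iff (hn : 4 ≤ n) (hout : ∀ i : Fin n, G.Adj i (i + 1))
    (hcr : ∀ a b c d : Fin n, a < b → b < c → c < d → G.Adj a c → ¬ G.Adj b d)
    {b : Fin n} (hb : b.val = n - 1) (ht : Tight G 0 b) :
    dG G b = 2 ↔ AdjB G 0 b := by
  have h0 : (0 : Fin n).val = 0 := Fin.val_zero n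
  set um : Fin n := ⟨n - 2, by omega⟩ with hum
  have hadjumb : G.Adj um b := adj_succ G hout (by simp [hum]; omega)
  have hadjb0 : G.Adj b 0 := adj_last_zero G hout (by omega) hb
  constructor
  · intro hd
    obtain ⟨c, hc1, hc2, _, hcb, hac, _, _, _⟩ := split G hout hcr ht (by omega)
    rw [h0] at hc1
    by_cases hcv : c.val = n - 2
    · exact ⟨c, by omega, hac⟩
    · exfalso
      apply dG_ne_two G hadjumb.symm hadjb0 hcb.symm ?_ ?_ ?_ hd
      · exact fun h => by have := congrArg Fin.val h; simp [hum] at this; omega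
      · exact fun h => hcv (by have := congrArg Fin.val h; simp [hum] at this; omega)
      · exact fun h => by have := congrArg Fin.val h; omega
  · rintro ⟨u, hu, hau⟩
    have hadjub : G.Adj u b := adj_succ G hout (by omega)
    have : NF G b = {u, (0 : Fin n)} := by
      ext w
      rw [mem_NF]
      simp only [Finset.mem_insert, Finset.mem_singleton]
      constructor
      · intro hw
        have hwb : w ≠ b := fun h => G.irrefl (h ▸ hw)
        have hwbv : w.val ≠ b.val := fun h => hwb (Fin.ext (by omega))
        by_cases h1 : w.val = n - 2
        · exact Or.inl (Fin.ext (by omega))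
        · by_cases h2 : w.val = 0
          · exact Or.inr (Fin.ext (by omega))
          · exfalso
            have hwlt := w.isLt
            exact cross G hcr (show (0:Fin n).val < w.val by omega)
              (show w.val < u.val by omega) (show u.val < b.val by omega) hau hw.symm
      · rintro (rfl | rfl)
        · exact hadjub.symm
        · exact hadjb0
    rw [dG_eq_card, this, Finset.card_insert_of_notMem, Finset.card_singleton]
    simp only [Finset.mem_singleton]
    exact fun h => by have := congrArg Fin.val h; omega


lemma diag_symm {u v : Fin n} (h : IsDiagonal G u v) : IsDiagonal G v u :=
  ⟨h.1.symm, h.2.2, h.2.1⟩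

lemma diag_iff {u v : Fin n} (h : u.val < v.val) :
    IsDiagonal G u v ↔ (G.Adj u v ∧ u.val + 2 ≤ v.val ∧ ¬(u.val = 0 ∧ v.val = n - 1)) := by
  have hu1 : u.val + 1 < n := by have := v.isLt; omega
  have hsucc : ((u + 1 : Fin n)).val = u.val + 1 := val_add_one hu1
  constructor
  · rintro ⟨ha, h2, h3⟩
    refine ⟨ha, ?_, ?_⟩
    · have : v.val ≠ u.val + 1 := fun hv => h2 (Fin.ext (by omega))
      omega
    · rintro ⟨hu0, hvl⟩
      apply h3
      apply Fin.ext
      have h1 : (1 : Fin n).val = 1 := by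
        rw [Fin.val_one']; exact Nat.mod_eq_of_lt (by omega)
      rw [Fin.val_add, h1, hvl, hu0, Nat.sub_add_cancel (by omega), Nat.mod_self]
  · rintro ⟨ha, hg, hw⟩
    refine ⟨ha, ?_, ?_⟩
    · intro hv
      have := congrArg Fin.val hv
      omega
    · intro hv
      have hval := congrArg Fin.val hv
      have h1 : (1 : Fin n).val = 1 := by
        rw [Fin.val_one']; exact Nat.mod_eq_of_lt (by have := v.isLt; omega)
      rw [Fin.val_add, h1] at hval
      rcases Nat.lt_or_ge (v.val + 1) n with hlt | hge
      · rw [Nat.mod_eq_of_lt hlt] at hval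
        omega
      · have hvl : v.val = n - 1 := by have := v.isLt; omega
        have : (v.val + 1) % n = 0 := by
          rw [show v.val + 1 = n by have := v.isLt; omega, Nat.mod_self]
        rw [this] at hval
        exact hw ⟨by omega, hvl⟩

/-- sorted characterisation of internal triangles -/
lemma tri_iff {p q r : Fin n} (h1 : p.val < q.val) (h2 : q.val < r.val) :
    IsInternalTriangle G p q r ↔
      (G.Adj p q ∧ G.Adj q r ∧ G.Adj p r ∧ p.val + 2 ≤ q.val ∧ q.val + 2 ≤ r.val ∧
        ¬(p.val = 0 ∧ r.val = n - 1)) := by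
  rw [IsInternalTriangle, diag_iff G h1, diag_iff G h2, diag_iff G (by omega)]
  constructor
  · rintro ⟨⟨a1, g1, _⟩, ⟨a2, g2, _⟩, ⟨a3, _, w3⟩⟩
    exact ⟨a1, a2, a3, g1, g2, w3⟩
  · rintro ⟨a1, a2, a3, g1, g2, w3⟩
    have hr := r.isLt
    refine ⟨⟨a1, g1, ?_⟩, ⟨a2, g2, ?_⟩, ⟨a3, by omega, w3⟩⟩
    · rintro ⟨_, hq⟩; omega
    · rintro ⟨hq, _⟩; omega

/-- the set of internal triangles as Finsets equals the image of the sorted triples -/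
lemma tri_set_eq (hn : 4 ≤ n) {b : Fin n} (hb : b.val = n - 1) :
    {S : Finset (Fin n) | ∃ x y z : Fin n, S = {x, y, z} ∧ IsInternalTriangle G x y z} =
      ↑((itxset G 0 b).image fun t => ({t.1, t.2.1, t.2.2} : Finset (Fin n))) := by
  have h0 : (0 : Fin n).val = 0 := Fin.val_zero n
  ext S
  simp only [Set.mem_setOf_eq, Finset.coe_image, Set.mem_image, Finset.mem_coe]
  constructor
  · rintro ⟨x, y, z, rfl, htri⟩
    -- sort x y z
    have hd1 : x ≠ y := G.ne_of_adj htri.1.1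
    have hd2 : y ≠ z := G.ne_of_adj htri.2.1.1
    have hd3 : x ≠ z := G.ne_of_adj htri.2.2.1
    have hv1 : x.val ≠ y.val := fun h => hd1 (Fin.ext h)
    have hv2 : y.val ≠ z.val := fun h => hd2 (Fin.ext h)
    have hv3 : x.val ≠ z.val := fun h => hd3 (Fin.ext h)
    obtain ⟨d1, d2, d3⟩ := htri
    -- produce sorted triple p < q < r with same set and triangle property
    obtain ⟨p, q, r, hpq, hqr, hset, htri'⟩ :
        ∃ p q r : Fin n, p.val < q.val ∧ q.val < r.val ∧
          ({x, y, z} : Finset (Fin n)) = {p, q, r} ∧ IsInternalTriangle G p q r := by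
      rcases Nat.lt_or_ge x.val y.val with hxy | hxy <;>
        rcases Nat.lt_or_ge y.val z.val with hyz | hyz <;>
        rcases Nat.lt_or_ge x.val z.val with hxz | hxz
      · exact ⟨x, y, z, hxy, hyz, rfl, d1, d2, d3⟩
      · exact absurd hxz (by omega)
      · exact ⟨x, z, y, by omega, by omega, by ext w; simp; tauto,
          d3, diag_symm G d2, d1⟩
      · exact ⟨z, x, y, by omega, by omega, by ext w; simp; tauto,
          diag_symm G d3, d1, diag_symm G d2⟩
      · exact ⟨y, x, z, by omega, by omega, by ext w; simp; tauto,
          diag_symm G d1, d3, d2⟩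
      · exact ⟨y, z, x, by omega, by omega, by ext w; simp; tauto,
          d2, diag_symm G d3, diag_symm G d1⟩
      · exact absurd hxz (by omega)
      · exact ⟨z, y, x, by omega, by omega, by ext w; simp; tauto,
          diag_symm G d2, diag_symm G d1, diag_symm G d3⟩
    rw [tri_iff G hpq hqr] at htri'
    obtain ⟨a1, a2, a3, g1, g2, w3⟩ := htri'
    refine ⟨(p, q, r), ?_, hset.symm⟩
    simp only [itxset, it0set, Finset.mem_filter, Finset.mem_univ, true_and]
    have hr := r.isLt
    refine ⟨⟨by omega, g1, g2, by omega, a1, a2, a3⟩, ?_⟩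
    rintro ⟨rfl, rfl⟩
    exact w3 ⟨by omega, by omega⟩
  · rintro ⟨⟨p, q, r⟩, hmem, rfl⟩
    simp only [itxset, it0set, Finset.mem_filter, Finset.mem_univ, true_and] at hmem
    obtain ⟨⟨_, g1, g2, h4, a1, a2, a3⟩, hne⟩ := hmem
    refine ⟨p, q, r, rfl, ?_⟩
    rw [tri_iff G (by omega) (by omega)]
    refine ⟨a1, a2, a3, g1, g2, ?_⟩
    rintro ⟨hp0, hrl⟩
    exact hne ⟨Fin.ext (by omega), Fin.ext (by omega)⟩

/-- injectivity of the sorted-triple-to-set map -/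
lemma tri_inj {p q r p' q' r' : Fin n}
    (h1 : p.val < q.val) (h2 : q.val < r.val)
    (h1' : p'.val < q'.val) (h2' : q'.val < r'.val)
    (hset : ({p, q, r} : Finset (Fin n)) = {p', q', r'}) :
    p = p' ∧ q = q' ∧ r = r' := by
  have hmem : ∀ w : Fin n, (w = p ∨ w = q ∨ w = r) ↔ (w = p' ∨ w = q' ∨ w = r') := by
    intro w
    have := Finset.ext_iff.1 hset w
    simpa using this
  have key : ∀ w : Fin n, (w.val = p.val ∨ w.val = q.val ∨ w.val = r.val) ↔
      (w.val = p'.val ∨ w.val = q'.val ∨ w.val = r'.val) := by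
    intro w
    constructor
    · intro hw
      have : w = p ∨ w = q ∨ w = r := by
        rcases hw with h | h | h
        · exact Or.inl (Fin.ext h)
        · exact Or.inr (Or.inl (Fin.ext h))
        · exact Or.inr (Or.inr (Fin.ext h))
      rcases (hmem w).1 this with h | h | h <;>
        [exact Or.inl (congrArg Fin.val h);
         exact Or.inr (Or.inl (congrArg Fin.val h));
         exact Or.inr (Or.inr (congrArg Fin.val h))]
    · intro hw
      have : w = p' ∨ w = q' ∨ w = r' := by
        rcases hw with h | h | h
        · exact Or.inl (Fin.ext h)
        · exact Or.inr (Or.inl (Fin.ext h))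
        · exact Or.inr (Or.inr (Fin.ext h))
      rcases (hmem w).2 this with h | h | h <;>
        [exact Or.inl (congrArg Fin.val h);
         exact Or.inr (Or.inl (congrArg Fin.val h));
         exact Or.inr (Or.inr (congrArg Fin.val h))]
    -- now derive equalities
  have hp := (key p).1 (Or.inl rfl)
  have hq := (key q).1 (Or.inr (Or.inl rfl))
  have hr := (key r).1 (Or.inr (Or.inr rfl))
  have hp' := (key p').2 (Or.inl rfl)
  have hq' := (key q').2 (Or.inr (Or.inl rfl))
  have hr' := (key r').2 (Or.inr (Or.inr rfl))
  refine ⟨Fin.ext ?_, Fin.ext ?_, Fin.ext ?_⟩ <;> omega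

lemma k_eq_itx (hn : 4 ≤ n) {b : Fin n} (hb : b.val = n - 1) :
    {S : Finset (Fin n) | ∃ x y z : Fin n, S = {x, y, z} ∧
      IsInternalTriangle G x y z}.ncard = itx G 0 b := by
  rw [tri_set_eq G hn hb, Set.ncard_coe_finset, itx]
  apply Finset.card_image_of_injOn
  intro t ht t' ht' heq
  obtain ⟨p, q, r⟩ := t
  obtain ⟨p', q', r'⟩ := t'
  simp only [Finset.mem_coe, itxset, it0set, Finset.mem_filter, Finset.mem_univ,
    true_and] at ht ht'
  have g1 : p.val + 2 ≤ q.val := ht.1.2.1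
  have g2 : q.val + 2 ≤ r.val := ht.1.2.2.1
  have g1' : p'.val + 2 ≤ q'.val := ht'.1.2.1
  have g2' : q'.val + 2 ≤ r'.val := ht'.1.2.2.1
  obtain ⟨h1, h2, h3⟩ := tri_inj (p := p) (q := q) (r := r) (p' := p') (q' := q') (r' := r')
    (by omega) (by omega) (by omega) (by omega) (by exact heq)
  simp [h1, h2, h3]

end

end MopProof

open MopProof in
theorem mop_internal_triangles_degree_two_count {n : ℕ} [NeZero n]
    (G : SimpleGraph (Fin n)) (hn : 4 ≤ n) (hG : IsMop G) (k : ℕ)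
    (hk : {S : Finset (Fin n) | ∃ a b c : Fin n,
        S = {a, b, c} ∧ IsInternalTriangle G a b c}.ncard = k) :
    degTwoCount G = k + 2 := by
  obtain ⟨hout, hcr, hcount⟩ := hG
  set b : Fin n := ⟨n - 1, by omega⟩ with hbdef
  have hb : b.val = n - 1 := rfl
  have ht : Tight G 0 b := tight_full G (by omega) hcount hb
  have h0 : (0 : Fin n).val = 0 := Fin.val_zero n
  have hST := ST G hout hcr (n - 1) 0 b (by rw [hb, h0]; omega) (by omega) ht
  rw [ind_neg (show ¬(n - 1 = 2) by omega)] at hST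
  have hdc := degTwoCount_split G hn hb
  rw [ind_congr (dg_zero_iff G hn hout hcr hb ht),
    ind_congr (dg_last_iff G hn hout hcr hb ht)] at hdc
  have hkk := k_eq_itx G hn hb
  rw [hk] at hkk
  omega
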